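/- In the n-state, n-letter NFA described (Δ(q_n,a_n)=∅; Δ(q_i,a_i)={q_{i+1},…,q_n} for i<n; Δ(q_i,a_j)=Q for j<i; Δ(q_i,a_j)={q_i} for i<j), the word w₁ defined recursively by w_n = a_n and w_i = w_{i+1} a_i w_{i+1} for 1 ≤ i ≤ n-1 is a mortal word of length 2^n - 1. -/

import Mathlib

/-- The action of an NFA with transition function `Δ` on a set of states,
extended homomorphically to words. -/
def wordImage {Q σ : Type*} (Δ : Q → σ → Set Q) : Set Q → List σ → Set Q
  | S, [] => S
  | S, a :: w => wordImage Δ (⋃ q ∈ S, Δ q a) w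

/-- The `(n+1)`-state, `(n+1)`-letter counter NFA: state `i` is `q_{i+1}` and
letter `j` is `a_{j+1}` (0-based). `Δ(q_i, a_i) = {q_{i+1}, …}` for `i` not
last, `Δ(q_last, a_last) = ∅`, `Δ(q_i, a_j) = Q` for `j < i`, and
`Δ(q_i, a_j) = {q_i}` for `i < j`. -/
def ctrDelta (n : ℕ) : Fin (n + 1) → Fin (n + 1) → Set (Fin (n + 1)) := fun i j =>
  if i = j then (if i = Fin.last n then ∅ else {h | i < h})
  else if j < i then Set.univ else {i}

/-- `counterWord n j` is the word `w_{n+1-j}` of the paper (over the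
`(n+1)`-letter alphabet): `w_last = a_last` and `w_i = w_{i+1} a_i w_{i+1}`. -/
def counterWord (n : ℕ) : ℕ → List (Fin (n + 1))
  | 0 => [Fin.last n]
  | j + 1 => counterWord n j ++ [Fin.last n - (Fin.ofNat (n + 1) (j + 1 : ℕ))] ++ counterWord n j

lemma wordImage_mono {Q σ : Type*} (Δ : Q → σ → Set Q) {S T : Set Q} (w : List σ)
    (h : S ⊆ T) : wordImage Δ S w ⊆ wordImage Δ T w := by
  induction w generalizing S T with
  | nil => exact h
  | cons a w ih =>
    exact ih (Set.biUnion_subset_biUnion_left h)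

lemma wordImage_empty {Q σ : Type*} (Δ : Q → σ → Set Q) (w : List σ) :
    wordImage Δ (∅ : Set Q) w = ∅ := by
  induction w with
  | nil => rfl
  | cons a w ih => simpa [wordImage] using ih

lemma wordImage_union {Q σ : Type*} (Δ : Q → σ → Set Q) (S T : Set Q) (w : List σ) :
    wordImage Δ (S ∪ T) w = wordImage Δ S w ∪ wordImage Δ T w := by
  induction w generalizing S T with
  | nil => rfl
  | cons a w ih =>
    simp only [wordImage, Set.biUnion_union]
    exact ih _ _

lemma wordImage_append {Q σ : Type*} (Δ : Q → σ → Set Q) (S : Set Q) (u v : List σ) :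
    wordImage Δ S (u ++ v) = wordImage Δ (wordImage Δ S u) v := by
  induction u generalizing S with
  | nil => rfl
  | cons a u ih => simp [wordImage, ih]

lemma sub_val (n j : ℕ) (hj : j ≤ n) :
    ((Fin.last n - (Fin.ofNat (n + 1) (j : ℕ))) : Fin (n + 1)).val = n - j := by
  have h1 : (Fin.ofNat (n + 1) (j : ℕ)).val = j := by
    simp [Fin.val_ofNat, Nat.mod_eq_of_lt (Nat.lt_succ_of_le hj)]
  rw [Fin.sub_def]
  simp only [h1, Fin.val_last]
  have h2 : n + 1 - j + n = (n - j) + (n + 1) := by omega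
  rw [h2, Nat.add_mod_right]
  exact Nat.mod_eq_of_lt (by omega)

lemma counterWord_letters (n : ℕ) : ∀ j, j ≤ n → ∀ b ∈ counterWord n j, n - j ≤ b.val := by
  intro j
  induction j with
  | zero => intro _ b hb; simp [counterWord] at hb; simp [hb]
  | succ j ih =>
    intro hj b hb
    simp only [counterWord, List.mem_append, List.mem_singleton] at hb
    rcases hb with (hb | hb) | hb
    · exact le_trans (by omega) (ih (by omega) b hb)
    · rw [hb, sub_val n (j+1) hj]
    · exact le_trans (by omega) (ih (by omega) b hb)

lemma wordImage_singleton_fix (n : ℕ) (a : Fin (n + 1)) (w : List (Fin (n + 1)))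
    (hw : ∀ b ∈ w, a < b) : wordImage (ctrDelta n) {a} w = {a} := by
  induction w with
  | nil => rfl
  | cons b w ih =>
    have hab : a < b := hw b List.mem_cons_self
    have hΔ : ctrDelta n a b = {a} := by
      rw [ctrDelta]
      rw [if_neg (Fin.ne_of_lt hab), if_neg (not_lt.mpr (le_of_lt hab))]
    simp only [wordImage, Set.biUnion_singleton, hΔ]
    exact ih (fun c hc => hw c (List.mem_cons_of_mem _ hc))

lemma counterWord_kills (n : ℕ) : ∀ j, j ≤ n → ∀ S : Set (Fin (n + 1)),
    (∀ h ∈ S, n - j ≤ h.val) → wordImage (ctrDelta n) S (counterWord n j) = ∅ := by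
  intro j
  induction j with
  | zero =>
    intro _ S hS
    have hS' : ∀ q ∈ S, q = Fin.last n := by
      intro q hq
      have := hS q hq
      exact Fin.ext (le_antisymm (Nat.lt_succ_iff.mp q.isLt) (by simpa using this))
    have : (⋃ q ∈ S, ctrDelta n q (Fin.last n)) = ∅ := by
      apply Set.eq_empty_iff_forall_notMem.mpr
      intro x hx
      simp only [Set.mem_iUnion] at hx
      obtain ⟨q, hq, hx⟩ := hx
      rw [hS' q hq] at hx
      rw [ctrDelta] at hx
      simp at hx
    simp only [counterWord, wordImage, this]
  | succ j ih =>
    intro hj S hS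
    set a : Fin (n + 1) := Fin.last n - (Fin.ofNat (n + 1) (j + 1 : ℕ)) with ha
    have hav : a.val = n - (j + 1) := sub_val n (j + 1) hj
    have hletters : ∀ b ∈ counterWord n j, a < b := by
      intro b hb
      have := counterWord_letters n j (by omega) b hb
      exact Fin.lt_def.mpr (by omega)
    -- split S
    have hsplit : S ⊆ {a} ∪ (S ∩ {h | n - j ≤ h.val}) := by
      intro h hh
      by_cases hha : h = a
      · exact Or.inl hha
      · refine Or.inr ⟨hh, ?_⟩
        have h1 := hS h hh
        have h2 : h.val ≠ n - (j + 1) := fun he => hha (Fin.ext (he.trans hav.symm))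
        simp only [Set.mem_setOf_eq]
        omega
    have hIH : wordImage (ctrDelta n) (S ∩ {h | n - j ≤ h.val}) (counterWord n j) = ∅ :=
      ih (by omega) _ (fun h hh => hh.2)
    have h1 : wordImage (ctrDelta n) S (counterWord n j) ⊆ {a} := by
      calc wordImage (ctrDelta n) S (counterWord n j)
          ⊆ wordImage (ctrDelta n) ({a} ∪ (S ∩ {h | n - j ≤ h.val})) (counterWord n j) :=
            wordImage_mono _ _ hsplit
        _ = wordImage (ctrDelta n) {a} (counterWord n j) ∪
              wordImage (ctrDelta n) (S ∩ {h | n - j ≤ h.val}) (counterWord n j) :=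
            wordImage_union _ _ _ _
        _ = {a} := by rw [hIH, wordImage_singleton_fix n a _ hletters, Set.union_empty]
    have hane : a ≠ Fin.last n := by
      intro he
      have := congrArg Fin.val he
      rw [hav, Fin.val_last] at this
      omega
    have hΔaa : ctrDelta n a a = {h | a < h} := by
      rw [ctrDelta, if_pos rfl, if_neg hane]
    have h2 : wordImage (ctrDelta n) (wordImage (ctrDelta n) S (counterWord n j)) [a]
        ⊆ {h | n - j ≤ h.val} := by
      simp only [wordImage]
      intro x hx
      simp only [Set.mem_iUnion] at hx
      obtain ⟨q, hq, hx⟩ := hx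
      have hqa : q = a := h1 hq
      rw [hqa, hΔaa] at hx
      have : a < x := hx
      rw [Fin.lt_def, hav] at this
      simp only [Set.mem_setOf_eq]
      omega
    have hz : wordImage (ctrDelta n) {h : Fin (n + 1) | n - j ≤ h.val} (counterWord n j) = ∅ :=
      ih (by omega) {h : Fin (n + 1) | n - j ≤ h.val} (fun h hh => hh)
    have hfin : wordImage (ctrDelta n)
        (wordImage (ctrDelta n) (wordImage (ctrDelta n) S (counterWord n j)) [a])
        (counterWord n j) = ∅ := by
      have h3 : wordImage (ctrDelta n)
          (wordImage (ctrDelta n) (wordImage (ctrDelta n) S (counterWord n j)) [a])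
          (counterWord n j)
          ⊆ wordImage (ctrDelta n) {h : Fin (n + 1) | n - j ≤ h.val} (counterWord n j) :=
        wordImage_mono _ _ h2
      rw [hz] at h3
      exact Set.subset_empty_iff.mp h3
    show wordImage (ctrDelta n) S
        (counterWord n j ++ [a] ++ counterWord n j) = ∅
    rw [wordImage_append, wordImage_append, hfin]

lemma counterWord_length (n : ℕ) : ∀ j, (counterWord n j).length + 1 = 2 ^ (j + 1) := by
  intro j
  induction j with
  | zero => rfl
  | succ j ih =>
    simp only [counterWord, List.length_append, List.length_singleton]
    rw [pow_succ]
    omega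

/-- The word `w₁ = counterWord n n` is a mortal word for the counter NFA of
length `2 ^ (n + 1) - 1`. -/
theorem stmt6 (n : ℕ) :
    wordImage (ctrDelta n) Set.univ (counterWord n n) = ∅ ∧
      (counterWord n n).length = 2 ^ (n + 1) - 1 := by
  constructor
  · exact counterWord_kills n n le_rfl Set.univ (fun h _ => by omega)
  · have := counterWord_length n n
    omega
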